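/- Let λ be a nonzero l-regular partition with e_l(λ) ≤ l, and let μ = (λ_1, λ_1, …, λ_1) be the rectangular partition with ℓ(λ) parts all equal to λ_1. Then every node B = (i, j) of the skew diagram [μ] \ [λ] (i.e. with 1 ≤ i ≤ ℓ(λ) and λ_i < j ≤ λ_1) has residue different from the residue of the node (1, λ_1); that is, j − i is not congruent to λ_1 − 1 modulo l. -/

import Mathlib

noncomputable section

/-- `p : ℕ → ℕ` represents the partition `λ` with `p i = λ_{i+1}` (0-indexed parts):
a weakly decreasing, eventually zero sequence. -/
def IsPartition (p : ℕ → ℕ) : Prop :=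
  (∀ i j, i ≤ j → p j ≤ p i) ∧ ∃ N, ∀ i, N ≤ i → p i = 0

/-- `ℓ(λ)`, the number of nonzero parts. -/
def plen (p : ℕ → ℕ) : ℕ := sInf {N | p N = 0}

/-- the degree (number of boxes) of the partition. -/
def pdeg (p : ℕ → ℕ) : ℕ := ∑ i ∈ Finset.range (plen p), p i

/-- `λ` is `l`-regular: no `l` consecutive parts are equal and nonzero. -/
def IsLRegular (l : ℕ) (p : ℕ → ℕ) : Prop :=
  ∀ i, p i ≠ 0 → p (i + l - 1) ≠ p i

/-- `λ` is `l`-restricted: `λ_i - λ_{i+1} < l` for all `i`. -/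
def IsLRestricted (l : ℕ) (p : ℕ → ℕ) : Prop :=
  ∀ i, p i - p (i + 1) < l

/-- the transpose (conjugate) partition. -/
def conjP (p : ℕ → ℕ) : ℕ → ℕ :=
  fun j => ((Finset.range (plen p)).filter fun i => j < p i).card

/-- the minimal `h ≥ 1` with `λ_1 - λ_{h+1} + h ≥ l`: when `e(λ) > l`, the first
`l`-segment of the `l`-edge lies in rows `1, …, h`. -/
def firstSeg (l : ℕ) (p : ℕ → ℕ) : ℕ := sInf {h | 1 ≤ h ∧ l ≤ p 0 - p h + h}

/-- removal of the `l`-edge (with fuel): if `e(λ) ≤ l` the whole edge is removed,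
otherwise the first `l`-segment is removed from rows `1, …, h` (`h = firstSeg`) and one
recurses on `(λ_{h+1}, λ_{h+2}, …)`. -/
def removeLEdgeAux (l : ℕ) : ℕ → (ℕ → ℕ) → ℕ → ℕ
  | 0, _ => fun _ => 0
  | n + 1, p =>
    if p 0 = 0 then fun _ => 0
    else if p 0 + plen p - 1 ≤ l then fun i => p (i + 1) - 1
    else fun i =>
      if i + 1 < firstSeg l p then p (i + 1) - 1
      else if i + 1 = firstSeg l p then p 0 + firstSeg l p - 1 - l
      else removeLEdgeAux l n (fun j => p (j + firstSeg l p)) (i - firstSeg l p)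

/-- the partition obtained by removing the `l`-edge of `λ`. -/
def removeLEdge (l : ℕ) (p : ℕ → ℕ) : ℕ → ℕ := removeLEdgeAux l (plen p) p

/-- `e_l(λ)`, the number of nodes of the `l`-edge. -/
def elen (l : ℕ) (p : ℕ → ℕ) : ℕ := pdeg p - pdeg (removeLEdge l p)

/-- the length of `Mull(λ)` prescribed by the defining recursion of the Mullineux map. -/
def mullLen (l : ℕ) (p : ℕ → ℕ) : ℕ :=
  if l ∣ elen l p then elen l p - plen p else elen l p - plen p + 1

/-- the Mullineux map (with fuel): `Mull(0) = 0` and, for `λ ≠ 0` `l`-regular with `ν`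
obtained from `λ` by removing the `l`-edge, `Mull(λ)` is the unique `l`-regular partition
whose `l`-edge removal leaves `Mull(ν)` and whose length is `e_l(λ) - ℓ(λ)` if
`l ∣ e_l(λ)` and `e_l(λ) - ℓ(λ) + 1` otherwise. -/
def mullAux (l : ℕ) : ℕ → (ℕ → ℕ) → ℕ → ℕ
  | 0, _ => fun _ => 0
  | n + 1, p =>
    if p 0 = 0 then fun _ => 0
    else
      Classical.epsilon fun μ : ℕ → ℕ =>
        IsPartition μ ∧ IsLRegular l μ ∧
          removeLEdge l μ = mullAux l n (removeLEdge l p) ∧ plen μ = mullLen l p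

/-- the Mullineux map. -/
def mull (l : ℕ) (p : ℕ → ℕ) : ℕ → ℕ := mullAux l (pdeg p) p

/-- the list of Mullineux components (with fuel). -/
def mullCompsAux (l : ℕ) : ℕ → (ℕ → ℕ) → List (ℕ → ℕ)
  | 0, _ => []
  | n + 1, p =>
    if p 0 = 0 then []
    else if elen l p ≤ l then [p]
    else (fun i => if i < firstSeg l p then p i else 0) ::
      mullCompsAux l n (fun j => p (j + firstSeg l p))

/-- the Mullineux components of `λ`. -/
def mullComps (l : ℕ) (p : ℕ → ℕ) : List (ℕ → ℕ) := mullCompsAux l (plen p) p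

/-- edge `l`-connectedness (with fuel): consecutive Mullineux components `α, ρ` satisfy
`α_1 - ρ_1 + ℓ(α) = l`. -/
def edgeConnAux (l : ℕ) : ℕ → (ℕ → ℕ) → Prop
  | 0, _ => True
  | n + 1, p =>
    if elen l p ≤ l then True
    else p 0 + firstSeg l p = l + p (firstSeg l p) ∧
      edgeConnAux l n fun j => p (j + firstSeg l p)

/-- `λ` is edge `l`-connected. -/
def EdgeLConnected (l : ℕ) (p : ℕ → ℕ) : Prop := edgeConnAux l (plen p) p

/-- the node `(i+1, λ_{i+1})` (in row `i+1`, 1-indexed) is a removable node. -/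
def Removable (p : ℕ → ℕ) (i : ℕ) : Prop := p (i + 1) < p i

/-- removal of the removable node in row `i+1`. -/
def removeNode (p : ℕ → ℕ) (i : ℕ) : ℕ → ℕ := fun k => if k = i then p i - 1 else p k

/-- there is an addable node `(i+1, λ_{i+1} + 1)` in row `i+1` (1-indexed). -/
def Addable (p : ℕ → ℕ) (i : ℕ) : Prop := i ≤ plen p ∧ (i = 0 ∨ p i < p (i - 1))

/-- the removable node in row `i+1` is suitable: its residue (mod `l`) differs from the
residue of every lower addable node. -/
def Suitable (l : ℕ) (p : ℕ → ℕ) (i : ℕ) : Prop :=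
  Removable p i ∧ ∀ j, i < j → Addable p j →
    ¬ ((p j : ℤ) - (j : ℤ) ≡ (p i : ℤ) - (i : ℤ) - 1 [ZMOD (l : ℤ)])

/-- the removable node in row `i+1` is co-suitable: its transpose node is a suitable
node of the transpose partition. -/
def CoSuitable (l : ℕ) (p : ℕ → ℕ) (i : ℕ) : Prop :=
  Removable p i ∧ Suitable l (conjP p) (p i - 1)

/-- `Φ_m`: partitions with at most `m` parts and `λ_1 - λ_m ≤ l - m`. -/
def Phi (l m : ℕ) : Set (ℕ → ℕ) :=
  {p | IsPartition p ∧ plen p ≤ m ∧ p 0 - p (m - 1) ≤ l - m}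

/-- `λ` is `m`-distinguished: `λ = λ⁰ + lλ̄` with
`λ⁰ = ((l-m)^k, a_1, …, a_m)`, `l - m > a_1 ≥ … ≥ a_m ≥ 0`, and `λ̄` a partition with
`λ̄_1 ≤ m - 1`. -/
def IsDistinguished (l m : ℕ) (p : ℕ → ℕ) : Prop :=
  ∃ (k : ℕ) (a : ℕ → ℕ) (pb : ℕ → ℕ),
    IsPartition pb ∧ pb 0 < m ∧
    (∀ i j, i ≤ j → a j ≤ a i) ∧ a 0 < l - m ∧ (∀ i, m ≤ i → a i = 0) ∧
    ∀ i, p i = (if i < k then l - m else a (i - k)) + l * pb i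

/-- `q` is obtained from `p` by removing a skew `l`-hook (spanning rows `a+1, …, b+1`,
1-indexed). -/
def IsHookRemoval (l : ℕ) (p q : ℕ → ℕ) : Prop :=
  IsPartition q ∧ ∃ a b : ℕ, a ≤ b ∧
    (∀ i, i < a → q i = p i) ∧
    (∀ i, a ≤ i → i < b → q i + 1 = p (i + 1)) ∧
    q b + l = p a + (b - a) ∧
    ∀ i, b < i → q i = p i

/-- `q` is the `l`-core of `p`: obtained by repeatedly removing skew `l`-hooks until
none remain. -/
def IsCoreOf (l : ℕ) (p q : ℕ → ℕ) : Prop :=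
  Relation.ReflTransGen (fun x y => IsHookRemoval l x y) p q ∧ ∀ r, ¬ IsHookRemoval l q r

/-- the `l`-core of `p`. -/
def lCore (l : ℕ) (p : ℕ → ℕ) : ℕ → ℕ := Classical.epsilon (IsCoreOf l p)


lemma removeLEdgeAux_le (l : ℕ) : ∀ (n : ℕ) (p : ℕ → ℕ),
    (∀ i j, i ≤ j → p j ≤ p i) → ∀ i, removeLEdgeAux l n p i ≤ p i := by
  intro n
  induction n with
  | zero => intro p _ i; exact Nat.zero_le _
  | succ n ih =>
    intro p hmono i
    simp only [removeLEdgeAux]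
    by_cases h0 : p 0 = 0
    · rw [if_pos h0]; exact Nat.zero_le _
    rw [if_neg h0]
    by_cases h1 : p 0 + plen p - 1 ≤ l
    · rw [if_pos h1]
      exact le_trans (Nat.sub_le _ _) (hmono i (i + 1) (by omega))
    rw [if_neg h1]
    by_cases h2 : i + 1 < firstSeg l p
    · rw [if_pos h2]
      exact le_trans (Nat.sub_le _ _) (hmono i (i + 1) (by omega))
    rw [if_neg h2]
    by_cases h3 : i + 1 = firstSeg l p
    · rw [if_pos h3]
      have hnm := Nat.notMem_of_lt_sInf (show i < firstSeg l p by omega)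
      have : ¬ (1 ≤ i ∧ l ≤ p 0 - p i + i) := hnm
      have hple : p i ≤ p 0 := hmono 0 i (Nat.zero_le _)
      rw [← h3]
      rcases Nat.eq_zero_or_pos i with hi | hi
      · subst hi; omega
      · omega
    rw [if_neg h3]
    have hhi : firstSeg l p ≤ i := by omega
    have := ih (fun j => p (j + firstSeg l p))
      (fun a b hab => hmono _ _ (by omega)) (i - firstSeg l p)
    simpa [Nat.sub_add_cancel hhi] using this

lemma removeLEdgeAux_lt (l : ℕ) (hl : 1 ≤ l) : ∀ (n : ℕ) (p : ℕ → ℕ),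
    (∀ i j, i ≤ j → p j ≤ p i) → p 0 ≠ 0 → removeLEdgeAux l n p 0 < p 0 := by
  intro n
  induction n with
  | zero => intro p _ h0; exact Nat.pos_of_ne_zero h0
  | succ n ih =>
    intro p hmono h0
    simp only [removeLEdgeAux]
    rw [if_neg h0]
    have hp1 : p (0 + 1) ≤ p 0 := hmono 0 (0 + 1) (by omega)
    have h0' : 1 ≤ p 0 := Nat.pos_of_ne_zero h0
    by_cases h1 : p 0 + plen p - 1 ≤ l
    · rw [if_pos h1]; omega
    rw [if_neg h1]
    by_cases h2 : 0 + 1 < firstSeg l p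
    · rw [if_pos h2]; omega
    rw [if_neg h2]
    by_cases h3 : 0 + 1 = firstSeg l p
    · rw [if_pos h3]; rw [← h3]; omega
    rw [if_neg h3]
    have hfs : firstSeg l p = 0 := by omega
    have := ih (fun j => p (j + firstSeg l p))
      (fun a b hab => hmono _ _ (by omega)) (by simpa [hfs] using h0)
    simpa [hfs] using this

lemma key_row_bound (l : ℕ) (hl : 2 ≤ l) (p : ℕ → ℕ)
    (hp : IsPartition p) (hne : p 0 ≠ 0) (hel : elen l p ≤ l) :
    ∀ k, 1 ≤ k → k < plen p → p 0 + k < l + p k := by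
  have hmono := hp.1
  have hSne : {N | p N = 0}.Nonempty := hp.2.elim fun N hN => ⟨N, hN N le_rfl⟩
  have hpL : p (plen p) = 0 := Nat.sInf_mem hSne
  have hlt0 : ∀ k, k < plen p → p k ≠ 0 := by
    intro k hk h0
    have : plen p ≤ k := Nat.sInf_le h0
    omega
  have hL1 : 1 ≤ plen p := by
    rcases Nat.eq_zero_or_pos (plen p) with h | h
    · exact absurd (h ▸ hpL) hne
    · exact h
  intro k hk1 hkL
  have hpk0 : p k ≤ p 0 := hmono 0 k (Nat.zero_le _)
  by_cases hcase : p 0 + plen p - 1 ≤ l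
  · have := hlt0 k hkL; omega
  by_cases hkh : k < firstSeg l p
  · have hnm := Nat.notMem_of_lt_sInf hkh
    have : ¬ (1 ≤ k ∧ l ≤ p 0 - p k + k) := hnm
    omega
  exfalso
  -- we will show l + 1 ≤ elen l p, contradicting hel
  have hhk : firstSeg l p ≤ k := le_of_not_gt hkh
  have hSne2 : {h | 1 ≤ h ∧ l ≤ p 0 - p h + h}.Nonempty := by
    refine ⟨plen p + l, ⟨by omega, ?_⟩⟩
    have hz : p (plen p + l) = 0 :=
      Nat.le_zero.mp (hpL ▸ hmono (plen p) (plen p + l) (by omega))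
    omega
  have hhS : 1 ≤ firstSeg l p ∧ l ≤ p 0 - p (firstSeg l p) + firstSeg l p :=
    Nat.sInf_mem hSne2
  have hh1 : 1 ≤ firstSeg l p := hhS.1
  have hhL : firstSeg l p < plen p := lt_of_le_of_lt hhk hkL
  obtain ⟨g, hg⟩ : ∃ g, firstSeg l p = g + 1 := ⟨firstSeg l p - 1, by omega⟩
  obtain ⟨m, hm⟩ : ∃ m, plen p = m + 1 := ⟨plen p - 1, by omega⟩
  set q := removeLEdge l p with hqdef
  have hq_le : ∀ i, q i ≤ p i := removeLEdgeAux_le l (plen p) p hmono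
  have hqL : q (plen p) = 0 := Nat.le_zero.mp (hpL ▸ hq_le (plen p))
  have hplenq : plen q ≤ plen p := Nat.sInf_le hqL
  have hq_def : ∀ i, q i =
      if i + 1 < firstSeg l p then p (i + 1) - 1
      else if i + 1 = firstSeg l p then p 0 + firstSeg l p - 1 - l
      else removeLEdgeAux l m (fun j => p (j + firstSeg l p)) (i - firstSeg l p) := by
    intro i
    show removeLEdgeAux l (plen p) p i = _
    rw [hm]
    simp only [removeLEdgeAux]
    rw [if_neg hne, if_neg (by rw [hm] at hcase ⊢; exact hcase)]
  have hqg : q g = p 0 + firstSeg l p - 1 - l := by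
    rw [hq_def, if_neg (by omega), if_pos (by omega)]
  have hqh : q (g + 1) < p (g + 1) := by
    rw [hq_def, if_neg (by omega), if_neg (by omega)]
    have hsub : g + 1 - firstSeg l p = 0 := by omega
    rw [hsub]
    have hph : p (0 + firstSeg l p) ≠ 0 := by
      have := hlt0 (firstSeg l p) hhL; simpa using this
    have := removeLEdgeAux_lt l (by omega) m (fun j => p (j + firstSeg l p))
      (fun a b hab => hmono _ _ (by omega)) hph
    calc removeLEdgeAux l m (fun j => p (j + firstSeg l p)) 0
        < p (0 + firstSeg l p) := this
      _ = p (g + 1) := by rw [Nat.zero_add, hg]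
  have hqi : ∀ i, i < g → q i = p (i + 1) - 1 := fun i hi => by
    rw [hq_def, if_pos (by omega)]
  -- head sum inequality
  have e3 : ∑ i ∈ Finset.range g, q i + g = ∑ i ∈ Finset.range g, p (i + 1) := by
    calc ∑ i ∈ Finset.range g, q i + g = ∑ i ∈ Finset.range g, (q i + 1) := by
          rw [Finset.sum_add_distrib, Finset.sum_const, Finset.card_range, smul_eq_mul,
            mul_one]
      _ = ∑ i ∈ Finset.range g, p (i + 1) := by
          refine Finset.sum_congr rfl fun i hi => ?_
          rw [hqi i (Finset.mem_range.mp hi)]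
          have := hlt0 (i + 1) (by have := Finset.mem_range.mp hi; omega)
          omega
  have e1 : ∑ i ∈ Finset.range (g + 1 + 1), q i
      = ∑ i ∈ Finset.range g, q i + q g + q (g + 1) := by
    rw [Finset.sum_range_succ, Finset.sum_range_succ]
  have e2 : ∑ i ∈ Finset.range (g + 1 + 1), p i
      = ∑ i ∈ Finset.range g, p (i + 1) + p (g + 1) + p 0 := by
    rw [Finset.sum_range_succ' p (g + 1), Finset.sum_range_succ]
  have hhead : ∑ i ∈ Finset.range (g + 1 + 1), q i + (l + 1)
      ≤ ∑ i ∈ Finset.range (g + 1 + 1), p i := by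
    rw [e1, e2]
    have hph1 : p (firstSeg l p) ≠ 0 := hlt0 _ hhL
    have hS2 := hhS.2
    rw [hg] at hqg hS2 hph1
    have hple : p (g + 1) ≤ p 0 := hmono 0 (g + 1) (Nat.zero_le _)
    omega
  -- combine
  have hsplit_q : ∑ i ∈ Finset.range (g + 1 + 1), q i
      + ∑ i ∈ Finset.Ico (g + 1 + 1) (plen p), q i = ∑ i ∈ Finset.range (plen p), q i := by
    simp only [Finset.range_eq_Ico]
    exact Finset.sum_Ico_consecutive _ (by omega) (by omega)
  have hsplit_p : ∑ i ∈ Finset.range (g + 1 + 1), p i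
      + ∑ i ∈ Finset.Ico (g + 1 + 1) (plen p), p i = ∑ i ∈ Finset.range (plen p), p i := by
    simp only [Finset.range_eq_Ico]
    exact Finset.sum_Ico_consecutive _ (by omega) (by omega)
  have htail : ∑ i ∈ Finset.Ico (g + 1 + 1) (plen p), q i
      ≤ ∑ i ∈ Finset.Ico (g + 1 + 1) (plen p), p i :=
    Finset.sum_le_sum fun i _ => hq_le i
  have hq_tot : pdeg q ≤ ∑ i ∈ Finset.range (plen p), q i := by
    unfold pdeg
    exact Finset.sum_le_sum_of_subset (Finset.range_subset_range.mpr hplenq)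
  have hfinal : pdeg q + (l + 1) ≤ pdeg p := by
    have h1 : pdeg p = ∑ i ∈ Finset.range (plen p), p i := rfl
    have h2 : pdeg q = ∑ i ∈ Finset.range (plen q), q i := rfl
    omega
  have : l + 1 ≤ elen l p := by
    unfold elen
    rw [← hqdef]
    omega
  omega

/-- Let `λ` be a nonzero `l`-regular partition with `e_l(λ) ≤ l`, and let
`μ = (λ_1^{ℓ(λ)})` be the enclosing rectangle. Then every node `(i, j)` of the skew
diagram `[μ] \ [λ]` (so `1 ≤ i ≤ ℓ(λ)` and `λ_i < j ≤ λ_1`) has residue different from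
the residue `λ_1 - 1` of the node `(1, λ_1)`. -/
theorem residue_of_skew_rectangle (l : ℕ) (hl : 2 ≤ l) (p : ℕ → ℕ)
    (hp : IsPartition p) (hne : p 0 ≠ 0) (hreg : IsLRegular l p)
    (hel : elen l p ≤ l) :
    ∀ i j : ℕ, 1 ≤ i → i ≤ plen p → p (i - 1) < j → j ≤ p 0 →
      ¬ ((j : ℤ) - (i : ℤ) ≡ (p 0 : ℤ) - 1 [ZMOD (l : ℤ)]) := by
  intro i j hi1 hiL hji hjp hcong
  rcases Nat.lt_or_ge i 2 with hi2 | hi2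
  · interval_cases i
    simp only [Nat.sub_self] at hji
    omega
  have hk := key_row_bound l hl p hp hne hel (i - 1) (by omega) (by omega)
  have hdvd : (l : ℤ) ∣ ((p 0 : ℤ) - 1) - ((j : ℤ) - (i : ℤ)) := hcong.dvd
  have hpos : 0 < ((p 0 : ℤ) - 1) - ((j : ℤ) - (i : ℤ)) := by
    have : (j : ℤ) ≤ (p 0 : ℤ) := by exact_mod_cast hjp
    have : (2 : ℤ) ≤ (i : ℤ) := by exact_mod_cast hi2
    omega
  have hle := Int.le_of_dvd hpos hdvd
  omega
end
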